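/- Let X be a set, C a concept class on X, and H a hypothesis class on X. Suppose there is some total function A : X → {0,1} which is n-consistent with C but which does not belong to H. Then n < LC^{EQ+MQ}(C, H). In particular, C(C, H) ≤ LC^{EQ+MQ}(C, H). -/

import Mathlib

/-!
Definitions for query learning: concepts are total functions `X → Bool`,
partially specified subsets are functions `X → Option Bool`.
-/

/-- A total concept `f` extends the partially specified subset `A`
(i.e. agrees with `A` on its domain). -/
def PExtends {X : Type*} (f : X → Bool) (A : X → Option Bool) : Prop :=
  ∀ x b, A x = some b → f x = b

/-- `A` is `n`-consistent with `C`: every restriction of `A` of size at most `n`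
has an extension in `C`. -/
def NConsistent {X : Type*} (C : Set (X → Bool)) (A : X → Option Bool) (n : ℕ) : Prop :=
  ∀ s : Finset X, s.card ≤ n → ∃ f ∈ C, ∀ x ∈ s, ∀ b, A x = some b → f x = b

/-- `A` is finitely consistent with `C`: every finite restriction of `A`
has an extension in `C`. -/
def FinitelyConsistent {X : Type*} (C : Set (X → Bool)) (A : X → Option Bool) : Prop :=
  ∀ s : Finset X, ∃ f ∈ C, ∀ x ∈ s, ∀ b, A x = some b → f x = b

/-- There is a complete binary tree of height `d`, with internal nodes labelled by
elements of `X` (here indexed by the binary path leading to the node), whose leaves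
can each be properly labelled by a concept of `C` agreeing with the root-to-leaf path. -/
def LdimGe {X : Type*} (C : Set (X → Bool)) (d : ℕ) : Prop :=
  ∃ t : List Bool → X, ∀ σ : List Bool, σ.length = d →
    ∃ f ∈ C, ∀ k, k < d → f (t (σ.take k)) = σ.getD k false

/-- The Littlestone dimension of `C`, valued in `ℕ∞` (`⊤` = no maximum exists). -/
noncomputable def Ldim {X : Type*} (C : Set (X → Bool)) : ℕ∞ :=
  sSup {n : ℕ∞ | ∃ d : ℕ, n = d ∧ LdimGe C d}

/-- `xs` is a valid sequence of counterexamples that an adversarial teacher with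
target concept `A` can return against the learner strategy `s` (the learner's next
hypothesis is a function of the list of counterexamples received so far). -/
def ValidEQPlay {X : Type*} (A : X → Bool) (s : List X → (X → Bool)) (xs : List X) : Prop :=
  ∀ (i : ℕ) (h : i < xs.length),
    s (xs.take i) (xs.get ⟨i, h⟩) ≠ A (xs.get ⟨i, h⟩)

/-- Some learner strategy with hypotheses from `H` identifies every concept of `C`
in at most `n` equivalence queries, against every teacher. -/
def EQLearnIn {X : Type*} (C H : Set (X → Bool)) (n : ℕ) : Prop :=
  ∃ s : List X → (X → Bool), (∀ l, s l ∈ H) ∧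
    ∀ A ∈ C, ∀ xs : List X, ValidEQPlay A s xs → xs.length < n

/-- The equivalence-query learning complexity `LC^EQ(C, H)`, valued in `ℕ∞`. -/
noncomputable def LCEQ {X : Type*} (C H : Set (X → Bool)) : ℕ∞ :=
  sInf {n : ℕ∞ | ∃ m : ℕ, n = m ∧ EQLearnIn C H m}

/-- `xs` is a valid play of a teacher with target `A` against the EQ+MQ learner
strategy `s`: the history records pairs `(x, A x)`; at each step, if the learner
makes the membership query `x` the teacher answers `(x, A x)`, and if the learner
makes an equivalence query `B` the teacher returns a counterexample to `B`. -/
def ValidEMPlay {X : Type*} (A : X → Bool) (s : List (X × Bool) → X ⊕ (X → Bool))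
    (xs : List (X × Bool)) : Prop :=
  ∀ (i : ℕ) (h : i < xs.length),
    (xs.get ⟨i, h⟩).2 = A (xs.get ⟨i, h⟩).1 ∧
    (∀ x, s (xs.take i) = Sum.inl x → (xs.get ⟨i, h⟩).1 = x) ∧
    (∀ B, s (xs.take i) = Sum.inr B → B (xs.get ⟨i, h⟩).1 ≠ A (xs.get ⟨i, h⟩).1)

/-- Some learner strategy making membership queries on elements of `X` and
equivalence queries from `H` identifies every concept of `C` in at most `n`
queries in total, against every teacher. -/
def EMLearnIn {X : Type*} (C H : Set (X → Bool)) (n : ℕ) : Prop :=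
  ∃ s : List (X × Bool) → X ⊕ (X → Bool),
    (∀ l B, s l = Sum.inr B → B ∈ H) ∧
    ∀ A ∈ C, ∀ xs : List (X × Bool), ValidEMPlay A s xs → xs.length < n

/-- The EQ+MQ learning complexity `LC^{EQ+MQ}(C, H)`, valued in `ℕ∞`. -/
noncomputable def LCEM {X : Type*} (C H : Set (X → Bool)) : ℕ∞ :=
  sInf {n : ℕ∞ | ∃ m : ℕ, n = m ∧ EMLearnIn C H m}

/-- Every total function `X → Bool` that is `n`-consistent with `C` belongs to `H`. -/
def CDimLe {X : Type*} (C H : Set (X → Bool)) (n : ℕ) : Prop :=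
  ∀ A : X → Bool, NConsistent C (fun x => some (A x)) n → A ∈ H

/-- The consistency dimension `C(C, H)`, valued in `ℕ∞`. -/
noncomputable def CDim {X : Type*} (C H : Set (X → Bool)) : ℕ∞ :=
  sInf {n : ℕ∞ | ∃ m : ℕ, n = m ∧ CDimLe C H m}

/-- Every partially specified subset that is `n`-consistent with `C` has a total
extension in `H`. -/
def SCDimLe {X : Type*} (C H : Set (X → Bool)) (n : ℕ) : Prop :=
  ∀ A : X → Option Bool, NConsistent C A n → ∃ B ∈ H, PExtends B A

/-- The strong consistency dimension `SC(C, H)`, valued in `ℕ∞`. -/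
noncomputable def SCDim {X : Type*} (C H : Set (X → Bool)) : ℕ∞ :=
  sInf {n : ℕ∞ | ∃ m : ℕ, n = m ∧ SCDimLe C H m}


section AuxEM

variable {X : Type*}

/-- Adversary step: answer according to `A`; if the learner makes an EQ with `B ∈ H`,
return a counterexample (exists since `A ∉ H`, so `B ≠ A`). -/
noncomputable def emStep (A : X → Bool) (H : Set (X → Bool)) (hA : A ∉ H)
    (s : List (X × Bool) → X ⊕ (X → Bool)) (hs : ∀ l B, s l = Sum.inr B → B ∈ H)
    (l : List (X × Bool)) :
    {e : X × Bool // e.2 = A e.1 ∧ (∀ x, s l = Sum.inl x → e.1 = x) ∧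
      ∀ B, s l = Sum.inr B → B e.1 ≠ A e.1} :=
  match h : s l with
  | Sum.inl x =>
      ⟨(x, A x), rfl,
        fun y hy => Sum.inl.inj hy,
        fun B hB => absurd hB (by simp)⟩
  | Sum.inr B =>
      have hex : ∃ x, B x ≠ A x := by
        by_contra hc
        push_neg at hc
        exact hA (funext hc ▸ hs l B h)
      ⟨(hex.choose, A hex.choose), rfl,
        fun y hy => absurd hy (by simp),
        fun B' hB' => by
          have : B = B' := Sum.inr.inj hB'
          subst this
          exact hex.choose_spec⟩

noncomputable def emPlay (A : X → Bool) (H : Set (X → Bool)) (hA : A ∉ H)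
    (s : List (X × Bool) → X ⊕ (X → Bool)) (hs : ∀ l B, s l = Sum.inr B → B ∈ H) :
    ℕ → List (X × Bool)
  | 0 => []
  | k + 1 => emPlay A H hA s hs k ++ [(emStep A H hA s hs (emPlay A H hA s hs k)).1]

theorem emPlay_length (A : X → Bool) (H : Set (X → Bool)) (hA : A ∉ H)
    (s : List (X × Bool) → X ⊕ (X → Bool)) (hs : ∀ l B, s l = Sum.inr B → B ∈ H)
    (k : ℕ) : (emPlay A H hA s hs k).length = k := by
  induction k with
  | zero => rfl
  | succ k ih => simp [emPlay, ih]

theorem emPlay_prefix (A : X → Bool) (H : Set (X → Bool)) (hA : A ∉ H)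
    (s : List (X × Bool) → X ⊕ (X → Bool)) (hs : ∀ l B, s l = Sum.inr B → B ∈ H)
    {i m : ℕ} (him : i ≤ m) : emPlay A H hA s hs i <+: emPlay A H hA s hs m := by
  induction m with
  | zero => simp_all
  | succ m ih =>
      rcases Nat.lt_or_ge i (m + 1) with h | h
      · exact (ih (Nat.lt_succ_iff.mp h)).trans (by simp [emPlay])
      · have : i = m + 1 := le_antisymm him h
        subst this; exact List.prefix_refl _

theorem emPlay_take (A : X → Bool) (H : Set (X → Bool)) (hA : A ∉ H)
    (s : List (X × Bool) → X ⊕ (X → Bool)) (hs : ∀ l B, s l = Sum.inr B → B ∈ H)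
    {i m : ℕ} (him : i ≤ m) :
    (emPlay A H hA s hs m).take i = emPlay A H hA s hs i := by
  obtain ⟨t, ht⟩ := emPlay_prefix A H hA s hs him
  rw [← ht, List.take_append, emPlay_length,
    List.take_of_length_le (le_of_eq (emPlay_length A H hA s hs i))]
  simp

theorem emPlay_get (A : X → Bool) (H : Set (X → Bool)) (hA : A ∉ H)
    (s : List (X × Bool) → X ⊕ (X → Bool)) (hs : ∀ l B, s l = Sum.inr B → B ∈ H)
    {i m : ℕ} (him : i < m) (h : i < (emPlay A H hA s hs m).length) :
    (emPlay A H hA s hs m).get ⟨i, h⟩ =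
      (emStep A H hA s hs (emPlay A H hA s hs i)).1 := by
  obtain ⟨t, ht⟩ := emPlay_prefix A H hA s hs him
  rw [show emPlay A H hA s hs (i + 1) = _ ++ [_] from rfl, List.append_assoc] at ht
  rw [List.get_eq_getElem, List.getElem_of_eq ht.symm]
  rw [List.getElem_append_right (le_of_eq (emPlay_length A H hA s hs i))]
  simp [emPlay_length]

theorem em_key {C H : Set (X → Bool)} (A : X → Bool) (n : ℕ)
    (hc : NConsistent C (fun x => some (A x)) n) (hA : A ∉ H)
    (m : ℕ) (hm : EMLearnIn C H m) : n < m := by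
  classical
  by_contra hlt
  push_neg at hlt
  obtain ⟨s, hs, hlearn⟩ := hm
  set xs := emPlay A H hA s hs m with hxs
  have hlen : xs.length = m := emPlay_length A H hA s hs m
  obtain ⟨f, hfC, hf⟩ := hc (xs.map Prod.fst).toFinset
    (le_trans (le_trans (List.toFinset_card_le _) (by simp [hlen])) hlt)
  have hf' : ∀ x ∈ xs.map Prod.fst, f x = A x := fun x hx =>
    hf x (List.mem_toFinset.mpr hx) (A x) rfl
  have hvalid : ValidEMPlay f s xs := by
    intro i hi
    have him : i < m := hlen ▸ hi
    have hget := emPlay_get A H hA s hs him hi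
    have htake := emPlay_take A H hA s hs (le_of_lt him)
    obtain ⟨h1, h2, h3⟩ := (emStep A H hA s hs (emPlay A H hA s hs i)).2
    have hmem : (xs.get ⟨i, hi⟩).1 ∈ xs.map Prod.fst :=
      List.mem_map_of_mem (xs.get_mem ⟨i, hi⟩)
    refine ⟨?_, ?_, ?_⟩
    · rw [hf' _ hmem, hget, h1]
    · intro x hx
      rw [htake] at hx
      rw [hget]; exact h2 x hx
    · intro B hB
      rw [htake] at hB
      rw [hf' _ hmem, hget]
      rw [hget] at *
      exact h3 B hB
  exact absurd (hlearn f hfC xs hvalid) (by rw [hlen]; exact lt_irrefl m)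

end AuxEM

theorem stmt_15 {X : Type*} (C H : Set (X → Bool)) :
    (∀ (A : X → Bool) (n : ℕ),
        NConsistent C (fun x => some (A x)) n → A ∉ H → (n : ℕ∞) < LCEM C H) ∧
    CDim C H ≤ LCEM C H := by
  constructor
  · intro A n hc hA
    refine lt_of_lt_of_le (show (n : ℕ∞) < (n + 1 : ℕ) by exact_mod_cast Nat.lt_succ_self n)
      (le_sInf ?_)
    rintro _ ⟨m, rfl, hm⟩
    exact_mod_cast em_key A n hc hA m hm
  · refine sInf_le_sInf ?_
    rintro _ ⟨m, rfl, hm⟩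
    refine ⟨m, rfl, fun A hAc => ?_⟩
    by_contra hA
    exact absurd (em_key A m hAc hA m hm) (lt_irrefl m)
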